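/- If n is an overpseudoprime to base b, then n is a strong pseudoprime to base b: writing n − 1 = 2^r · s with s odd, either b^s ≡ 1 (mod n) or b^{2^i s} ≡ −1 (mod n) for some 0 ≤ i < r. -/

import Mathlib

/-- Multiplicative order of `b` modulo `n`. -/
noncomputable def ordn (b n : ℕ) : ℕ := orderOf (b : ZMod n)

/-- `n` is an overpseudoprime to base `b`: composite, coprime to `b`, and the
multiplicative order of `b` mod `d` is the same for all divisors `d > 1` of `n`. -/
def Overpsp (b n : ℕ) : Prop :=
  1 < n ∧ ¬ n.Prime ∧ Nat.Coprime b n ∧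
    ∀ d, d ∣ n → 1 < d → ordn b d = ordn b n

/-- `n` is primover to base `b`: prime or overpseudoprime to base `b`. -/
def Primover (b n : ℕ) : Prop := n.Prime ∨ Overpsp b n

/-- The cyclotomic coset of `2` modulo `n` containing `s`. -/
def coset (n s : ℕ) : Finset ℕ := (Finset.range n).image (fun k => 2 ^ k * s % n)

/-- The number of distinct cyclotomic cosets of `2` modulo `n`. -/
def numCosets (n : ℕ) : ℕ := ((Finset.Ioo 0 n).image (coset n)).card

/-- `Φ_N(b)` as a natural number. -/
noncomputable def PhiN (N b : ℕ) : ℕ := ((Polynomial.cyclotomic N ℤ).eval (b : ℤ)).toNat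

theorem stmt10 (b n r s : ℕ) (hb : 1 < b) (hodd : Odd n) (h : Overpsp b n)
    (hs : Odd s) (hrs : n - 1 = 2 ^ r * s) :
    (b : ZMod n) ^ s = 1 ∨ ∃ i < r, (b : ZMod n) ^ (2 ^ i * s) = -1 := by
  obtain ⟨hn1, hnp, hcop, hord⟩ := h
  haveI : NeZero n := ⟨by omega⟩
  set m := orderOf (b : ZMod n) with hm
  have hbu : IsUnit (b : ZMod n) := (ZMod.isUnit_iff_coprime b n).mpr hcop
  have hmpos : 0 < m := by
    obtain ⟨u, hu⟩ := hbu
    rw [hm, ← hu, orderOf_units]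
    exact orderOf_pos u
  have hordp : ∀ p : ℕ, p.Prime → p ∣ n → orderOf (b : ZMod p) = m := by
    intro p hp hpn
    exact hord p hpn hp.one_lt
  have hmp : ∀ p : ℕ, p.Prime → p ∣ n → m ∣ p - 1 := by
    intro p hp hpn
    haveI : Fact p.Prime := ⟨hp⟩
    have hb0 : (b : ZMod p) ≠ 0 := by
      rw [Ne, ZMod.natCast_eq_zero_iff]
      intro hdvd
      exact hp.not_dvd_one (hcop ▸ Nat.dvd_gcd hdvd hpn)
    rw [← hordp p hp hpn]
    exact orderOf_dvd_of_pow_eq_one (ZMod.pow_card_sub_one_eq_one hb0)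
  -- m ∣ n - 1
  have hcast1 : ((n : ℕ) : ZMod m) = ((1 : ℕ) : ZMod m) := by
    have hn0 : n ≠ 0 := by omega
    have hl : (n.primeFactorsList.prod : ℕ) = n := Nat.prod_primeFactorsList hn0
    calc ((n : ℕ) : ZMod m) = ((n.primeFactorsList.prod : ℕ) : ZMod m) := by rw [hl]
      _ = (n.primeFactorsList.map (fun p => ((p : ℕ) : ZMod m))).prod :=
          Nat.cast_list_prod _
      _ = 1 := List.prod_eq_one (by
            intro x hx
            simp only [List.mem_map] at hx
            obtain ⟨p, hp, rfl⟩ := hx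
            have hpp := Nat.prime_of_mem_primeFactorsList hp
            have hpn := Nat.dvd_of_mem_primeFactorsList hp
            have hz : ((p - 1 : ℕ) : ZMod m) = 0 :=
              (ZMod.natCast_eq_zero_iff _ _).mpr (hmp p hpp hpn)
            have hp1 : p = (p - 1) + 1 := by have := hpp.two_le; omega
            rw [hp1, Nat.cast_add, Nat.cast_one, hz, zero_add])
      _ = ((1 : ℕ) : ZMod m) := by simp
  have hmdvd : m ∣ n - 1 := by
    have h2 := (ZMod.natCast_eq_natCast_iff _ _ _).mp hcast1
    exact (Nat.modEq_iff_dvd' (by omega)).mp h2.symm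
  set j := m.factorization 2 with hj
  set t := m / 2 ^ j with ht
  have hm_eq : 2 ^ j * t = m := Nat.ordProj_mul_ordCompl_eq_self m 2
  have ht_odd : ¬ 2 ∣ t := Nat.not_dvd_ordCompl Nat.prime_two hmpos.ne'
  have hmrs : m ∣ 2 ^ r * s := hrs ▸ hmdvd
  have hts : t ∣ s := by
    have h1 : t ∣ 2 ^ r * s := dvd_trans (Dvd.intro_left _ hm_eq) hmrs
    exact Nat.Coprime.dvd_of_dvd_mul_left
      (Nat.Coprime.pow_right _ ((Nat.prime_two.coprime_iff_not_dvd).mpr ht_odd).symm) h1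
  have hs2 : ¬ 2 ∣ s := by
    intro h2s
    exact (Nat.not_odd_iff_even.mpr (even_iff_two_dvd.mpr h2s)) hs
  rcases Nat.eq_zero_or_pos j with hj0 | hjpos
  · -- j = 0 : m is odd, m ∣ s
    left
    have hmt : m = t := by rw [← hm_eq, hj0]; ring
    rw [← orderOf_dvd_iff_pow_eq_one, ← hm]
    exact hmt ▸ hts
  · -- j ≥ 1
    right
    have hjr : j ≤ r := by
      have h1 : (2 : ℕ) ^ j ∣ 2 ^ r * s := dvd_trans (Dvd.intro _ hm_eq) hmrs
      have h2 : (2 : ℕ) ^ j ∣ 2 ^ r :=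
        Nat.Coprime.dvd_of_dvd_mul_right
          (Nat.Coprime.pow_left _ ((Nat.prime_two.coprime_iff_not_dvd).mpr hs2)) h1
      exact (Nat.pow_dvd_pow_iff_le_right (by norm_num)).mp h2
    refine ⟨j - 1, by omega, ?_⟩
    have h2j : (2 : ℕ) ^ (j - 1) * 2 = 2 ^ j := by
      rw [← pow_succ]; congr 1; omega
    set y := b ^ (2 ^ (j - 1) * s) with hy
    have hy1 : 1 ≤ y := Nat.one_le_pow _ _ (by omega)
    have hmj : m ∣ 2 ^ j * s := hm_eq ▸ Nat.mul_dvd_mul dvd_rfl hts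
    have hpow1 : (b : ZMod n) ^ (2 ^ j * s) = 1 := orderOf_dvd_iff_pow_eq_one.mp hmj
    have hysq : y ^ 2 = b ^ (2 ^ j * s) := by
      rw [hy, ← pow_mul]
      congr 1
      calc 2 ^ (j - 1) * s * 2 = 2 ^ (j - 1) * 2 * s := by ring
        _ = 2 ^ j * s := by rw [h2j]
    have hndvd : n ∣ y ^ 2 - 1 := by
      have h1 : ((b ^ (2 ^ j * s) : ℕ) : ZMod n) = ((1 : ℕ) : ZMod n) := by
        push_cast; exact hpow1
      have h2 := (ZMod.natCast_eq_natCast_iff _ _ _).mp h1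
      have h3 := (Nat.modEq_iff_dvd' (Nat.one_le_pow _ _ (by omega))).mp h2.symm
      rwa [← hysq] at h3
    have hfac : y ^ 2 - 1 = (y + 1) * (y - 1) := by
      have h4 := Nat.sq_sub_sq y 1
      simpa using h4
    have hpny : ∀ p : ℕ, p.Prime → p ∣ n → ¬ p ∣ y - 1 := by
      intro p hp hpn hdvd
      haveI : Fact p.Prime := ⟨hp⟩
      have h1 : y ≡ 1 [MOD p] := ((Nat.modEq_iff_dvd' hy1).mpr hdvd).symm
      have h2 : ((y : ℕ) : ZMod p) = ((1 : ℕ) : ZMod p) :=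
        (ZMod.natCast_eq_natCast_iff _ _ _).mpr h1
      have h3 : (b : ZMod p) ^ (2 ^ (j - 1) * s) = 1 := by
        rw [hy] at h2; push_cast at h2; exact h2
      have h4 : m ∣ 2 ^ (j - 1) * s := by
        rw [← hordp p hp hpn]
        exact orderOf_dvd_of_pow_eq_one h3
      have h5 : (2 : ℕ) ^ j ∣ 2 ^ (j - 1) * s := dvd_trans (Dvd.intro _ hm_eq) h4
      have h6 : (2 : ℕ) ^ (j - 1) * 2 ∣ 2 ^ (j - 1) * s := by rwa [h2j]
      exact hs2 ((Nat.mul_dvd_mul_iff_left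
        (Nat.pow_pos (by norm_num) : (0 : ℕ) < 2 ^ (j - 1))).mp h6)
    have hny : n ∣ y + 1 := by
      rw [← Nat.factorization_le_iff_dvd (by omega) (by omega)]
      rw [Finsupp.le_def]
      intro p
      rcases em p.Prime with hp | hp
      · rcases em (p ∣ n) with hpn | hpn
        · have hppow : p ^ n.factorization p ∣ (y + 1) * (y - 1) := by
            rw [← hfac]
            exact dvd_trans (Nat.ordProj_dvd n p) hndvd
          have hcp : Nat.Coprime (p ^ n.factorization p) (y - 1) :=
            Nat.Coprime.pow_left _ ((hp.coprime_iff_not_dvd).mpr (hpny p hp hpn))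
          have h7 := hcp.dvd_of_dvd_mul_right hppow
          exact (Nat.Prime.pow_dvd_iff_le_factorization hp (by omega)).mp h7
        · rw [Nat.factorization_eq_zero_of_not_dvd hpn]; exact Nat.zero_le _
      · rw [Nat.factorization_eq_zero_of_not_prime n hp]; exact Nat.zero_le _
    have hz : ((y + 1 : ℕ) : ZMod n) = 0 := (ZMod.natCast_eq_zero_iff _ _).mpr hny
    rw [hy] at hz
    push_cast at hz
    linear_combination hz
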